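/- A Latin square L of order n has an orthogonal mate if and only if the chromatic number of its Latin square graph L_3(L,n) equals n. -/

import Mathlib

def IsLatin (n : ℕ) (L : Fin n → Fin n → Fin n) : Prop :=
  (∀ i, Function.Bijective (L i)) ∧ (∀ j, Function.Bijective fun i => L i j)

def latinGraph (n : ℕ) (L : Fin n → Fin n → Fin n) : SimpleGraph (Fin n × Fin n) :=
  SimpleGraph.fromRel fun a b => a.1 = b.1 ∨ a.2 = b.2 ∨ L a.1 a.2 = L b.1 b.2

def IsKDominating {V : Type*} (G : SimpleGraph V) (k : ℕ) (S : Set V) : Prop :=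
  ∀ v ∉ S, k ≤ (S ∩ G.neighborSet v).ncard

def IsTransversal (n : ℕ) (L : Fin n → Fin n → Fin n) (S : Set (Fin n × Fin n)) : Prop :=
  (∀ i : Fin n, ∃! c, c ∈ S ∧ c.1 = i) ∧
  (∀ j : Fin n, ∃! c, c ∈ S ∧ c.2 = j) ∧
  (∀ s : Fin n, ∃! c, c ∈ S ∧ L c.1 c.2 = s)

def IsQuasiTransversal (n : ℕ) (L : Fin n → Fin n → Fin n) (S : Set (Fin n × Fin n)) : Prop :=
  (∃ i0, ({c ∈ S | c.1 = i0}).ncard = 2 ∧ ∀ i, i ≠ i0 → ({c ∈ S | c.1 = i}).ncard = 1) ∧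
  (∃ j0, ({c ∈ S | c.2 = j0}).ncard = 2 ∧ ∀ j, j ≠ j0 → ({c ∈ S | c.2 = j}).ncard = 1) ∧
  (∃ s0, ({c ∈ S | L c.1 c.2 = s0}).ncard = 2 ∧ ∀ s, s ≠ s0 → ({c ∈ S | L c.1 c.2 = s}).ncard = 1)

def IsPartialTransversal (n : ℕ) (L : Fin n → Fin n → Fin n) (S : Set (Fin n × Fin n)) : Prop :=
  ∀ a ∈ S, ∀ b ∈ S, a ≠ b → a.1 ≠ b.1 ∧ a.2 ≠ b.2 ∧ L a.1 a.2 ≠ L b.1 b.2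

def IsKPlex (n : ℕ) (L : Fin n → Fin n → Fin n) (k : ℕ) (S : Set (Fin n × Fin n)) : Prop :=
  (∀ i, ({c ∈ S | c.1 = i}).ncard = k) ∧ (∀ j, ({c ∈ S | c.2 = j}).ncard = k) ∧
  (∀ s, ({c ∈ S | L c.1 c.2 = s}).ncard = k)

noncomputable def gamma3 (n : ℕ) (L : Fin n → Fin n → Fin n) : ℕ :=
  sInf {m | ∃ S : Set (Fin n × Fin n), IsKDominating (latinGraph n L) 3 S ∧ S.ncard = m}

noncomputable def domatic3 (n : ℕ) (L : Fin n → Fin n → Fin n) : ℕ :=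
  sSup {t | ∃ P : Fin t → Set (Fin n × Fin n),
    (Pairwise fun a b => Disjoint (P a) (P b)) ∧ (⋃ i, P i) = Set.univ ∧
    ∀ i, IsKDominating (latinGraph n L) 3 (P i)}


lemma latinGraph_adj (n : ℕ) (L : Fin n → Fin n → Fin n) (a b : Fin n × Fin n) :
    (latinGraph n L).Adj a b ↔
    a ≠ b ∧ (a.1 = b.1 ∨ a.2 = b.2 ∨ L a.1 a.2 = L b.1 b.2) := by
  simp only [latinGraph, SimpleGraph.fromRel_adj]
  constructor
  · rintro ⟨h, h2 | h2⟩
    · exact ⟨h, h2⟩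
    · refine ⟨h, ?_⟩
      rcases h2 with h2 | h2 | h2
      · exact Or.inl h2.symm
      · exact Or.inr (Or.inl h2.symm)
      · exact Or.inr (Or.inr h2.symm)
  · rintro ⟨h, h2⟩; exact ⟨h, Or.inl h2⟩

theorem stmt8 (n : ℕ) (L : Fin n → Fin n → Fin n) (hL : IsLatin n L) :
    (∃ B : Fin n → Fin n → Fin n, IsLatin n B ∧
      Function.Injective fun c : Fin n × Fin n => (L c.1 c.2, B c.1 c.2)) ↔
    (latinGraph n L).chromaticNumber = (n : ℕ∞) := by
  classical
  constructor
  · rintro ⟨B, ⟨hBr, hBc⟩, hBinj⟩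
    -- proper coloring by B
    have hcol : (latinGraph n L).Colorable n := by
      refine ⟨SimpleGraph.Coloring.mk (fun c => B c.1 c.2) ?_⟩
      intro a b hadj
      rw [latinGraph_adj] at hadj
      obtain ⟨hne, hcase⟩ := hadj
      intro hB
      apply hne
      rcases hcase with h | h | h
      · have : a.2 = b.2 := (hBr a.1).1 (by simpa [h] using hB)
        exact Prod.ext h this
      · have : a.1 = b.1 := (hBc a.2).1 (by simpa [h] using hB)
        exact Prod.ext this h
      · exact hBinj (Prod.ext h hB)
    refine le_antisymm (by exact_mod_cast hcol.chromaticNumber_le) ?_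
    rcases Nat.eq_zero_or_pos n with hn | hn
    · simp [hn]
    -- row 0 is a clique of size n
    have i0 : Fin n := ⟨0, hn⟩
    set s : Finset (Fin n × Fin n) := Finset.univ.image (fun j => (i0, j)) with hs
    have hclique : (latinGraph n L).IsClique s := by
      intro a ha b hb hab
      simp only [hs, Finset.coe_image, Set.mem_image] at ha hb
      obtain ⟨ja, -, rfl⟩ := ha
      obtain ⟨jb, -, rfl⟩ := hb
      rw [latinGraph_adj]
      exact ⟨hab, Or.inl rfl⟩
    have hcard : s.card = n := by
      rw [hs, Finset.card_image_of_injective _ (fun x y h => by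
        simpa using congrArg Prod.snd h)]
      simp
    have := hclique.card_le_chromaticNumber
    rwa [hcard] at this
  · intro hchi
    have hcol : (latinGraph n L).Colorable n := by
      rw [← SimpleGraph.chromaticNumber_le_iff_colorable, hchi]
    obtain ⟨C⟩ := hcol
    refine ⟨fun i j => C (i, j), ⟨?_, ?_⟩, ?_⟩
    · intro i
      rw [Fintype.bijective_iff_injective_and_card]
      refine ⟨fun j j' h => ?_, rfl⟩
      by_contra hne
      exact C.valid ((latinGraph_adj n L (i, j) (i, j')).mpr
        ⟨by simp [hne], Or.inl rfl⟩) h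
    · intro j
      rw [Fintype.bijective_iff_injective_and_card]
      refine ⟨fun i i' h => ?_, rfl⟩
      by_contra hne
      exact C.valid ((latinGraph_adj n L (i, j) (i', j)).mpr
        ⟨by simp [hne], Or.inr (Or.inl rfl)⟩) h
    · intro a b h
      simp only [Prod.mk.injEq] at h
      by_contra hne
      exact C.valid ((latinGraph_adj n L a b).mpr
        ⟨hne, Or.inr (Or.inr h.1)⟩) h.2
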